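/- arXiv:1801.06676 — 4 statements merged into one kernel-verified Lean document; each statement's English description precedes it below -/
import Mathlib

section
/- Let G be a locally compact Hausdorff topological group that is unimodular, with (two-sided invariant) Haar measure μ. Let c : G × G × G → ℂ be continuous, left-invariant (c(g g₀, g g₁, g g₂) = c(g₀, g₁, g₂) for all g, g₀, g₁, g₂), cyclic (c(g₀, g₁, g₂) = c(g₂, g₀, g₁)), and a homogeneous group 2-cocycle (c(g₁,g₂,g₃) − c(g₀,g₂,g₃) + c(g₀,g₁,g₃) − c(g₀,g₁,g₂) = 0 for all g₀,…,g₃). For continuous compactly supported f₀, f₁, f₂ : G → ℂ define τ_c(f₀, f₁, f₂) := ∫_G ∫_G c(e, g₁, g₁g₂) f₀((g₁g₂)⁻¹) f₁(g₁) f₂(g₂) dμ(g₁) dμ(g₂). Then τ_c is a cyclic 2-cocycle on the convolution algebra C_c(G): (i) τ_c(f₀, f₁, f₂) = τ_c(f₂, f₀, f₁) for all f₀, f₁, f₂ ∈ C_c(G); (ii) for all f₀, f₁, f₂, f₃ ∈ C_c(G), τ_c(f₀⋆f₁, f₂, f₃) − τ_c(f₀, f₁⋆f₂, f₃) + τ_c(f₀,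 f₁, f₂⋆f₃) − τ_c(f₃⋆f₀, f₁, f₂) = 0. -/
set_option linter.unusedSectionVars false
set_option maxHeartbeats 2000000


open MeasureTheory

/-- The convolution product on the algebra of continuous compactly supported functions of a
locally compact group: `(f ⋆ h)(x) = ∫ g, f g * h (g⁻¹ x) dμ(g)`. -/
noncomputable def groupConv {G : Type*} [Group G] [MeasurableSpace G]
    (μ : Measure G) (f h : G → ℂ) : G → ℂ :=
  fun x => ∫ g : G, f g * h (g⁻¹ * x) ∂μ

/-- The cyclic 2-cochain on the convolution algebra associated to a homogeneous group
2-cochain `c`: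
`τ_c(f₀,f₁,f₂) = ∫∫ c(e, g₁, g₁g₂) f₀((g₁g₂)⁻¹) f₁(g₁) f₂(g₂) dμ(g₁) dμ(g₂)`. -/
noncomputable def tauOf {G : Type*} [Group G] [MeasurableSpace G]
    (μ : Measure G) (c : G → G → G → ℂ) (f₀ f₁ f₂ : G → ℂ) : ℂ :=
  ∫ g₁ : G, ∫ g₂ : G,
    c 1 g₁ (g₁ * g₂) * f₀ ((g₁ * g₂)⁻¹) * f₁ g₁ * f₂ g₂ ∂μ ∂μ

section TauHelpers

open Measure
open scoped NNReal

variable {G : Type*} [Group G] [TopologicalSpace G] [IsTopologicalGroup G] [T2Space G]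
    [LocallyCompactSpace G] [MeasurableSpace G] [BorelSpace G]
    (μ : Measure G) [μ.IsHaarMeasure] [μ.IsMulRightInvariant]

lemma hcs_of {α : Type*} [TopologicalSpace α] [T2Space α] {f : α → ℂ} {K : Set α}
    (hK : IsCompact K) (h : ∀ x, f x ≠ 0 → x ∈ K) : HasCompactSupport f :=
  HasCompactSupport.intro hK fun x hx => by_contra fun h0 => hx (h x h0)

/-- Inversion invariance of integrals of continuous compactly supported real functions
with respect to a two-sided-invariant (unimodular) Haar measure. -/
lemma integral_inv_eq_self_real (f : G → ℝ) (hf : Continuous f) (h2 : HasCompactSupport f) :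
    ∫ x, f x⁻¹ ∂μ = ∫ x, f x ∂μ := by
  have hmap : ∀ (g : G → ℝ), ∫ x, g x ∂μ.inv = ∫ x, g x⁻¹ ∂μ := by
    intro g
    rw [inv_def]
    exact MeasureTheory.integral_map_equiv (Homeomorph.inv G).toMeasurableEquiv g
  set ci : ℝ≥0 := haarScalarFactor μ.inv μ with hci
  have key : ∀ (g : G → ℝ), Continuous g → HasCompactSupport g →
      ∫ x, g x⁻¹ ∂μ = (ci : ℝ) * ∫ x, g x ∂μ := by
    intro g hg h2g
    rw [← hmap g]
    rw [integral_isMulLeftInvariant_eq_smul_of_hasCompactSupport μ.inv μ hg h2g,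
      integral_smul_nnreal_measure]
    rfl
  have sq : ∀ (g : G → ℝ), Continuous g → HasCompactSupport g →
      ∫ x, g x ∂μ = (ci : ℝ) * ((ci : ℝ) * ∫ x, g x ∂μ) := by
    intro g hg h2g
    have h1 := key (fun x => g x⁻¹) (hg.comp continuous_inv)
      (h2g.comp_homeomorph (Homeomorph.inv G))
    simp only [inv_inv] at h1
    conv_lhs => rw [h1, key g hg h2g]
  obtain ⟨⟨g, g_cont⟩, g_comp, g_nonneg, g_one⟩ :
    ∃ (g : C(G, ℝ)), HasCompactSupport g ∧ 0 ≤ g ∧ g 1 ≠ 0 := exists_continuous_nonneg_pos 1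
  have int_g_pos : 0 < ∫ x, g x ∂μ :=
    g_cont.integral_pos_of_hasCompactSupport_nonneg_nonzero g_comp g_nonneg g_one
  have hc1 : (ci : ℝ) = 1 := by
    have := sq g g_cont g_comp
    have h2' : (ci : ℝ) * (ci : ℝ) = 1 := by nlinarith [this, int_g_pos]
    nlinarith [ci.coe_nonneg]
  rw [key f hf h2, hc1, one_mul]

/-- Inversion invariance for complex valued functions. -/
lemma integral_inv_eq_self_cc (f : G → ℂ) (hf : Continuous f) (h2 : HasCompactSupport f) :
    ∫ x, f x⁻¹ ∂μ = ∫ x, f x ∂μ := by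
  have hfi : Integrable f μ := hf.integrable_of_hasCompactSupport h2
  have hfi' : Integrable (fun x => f x⁻¹) μ :=
    (hf.comp continuous_inv).integrable_of_hasCompactSupport
      (h2.comp_homeomorph (Homeomorph.inv G))
  have h1 := integral_re hfi
  have h1' := integral_re hfi'
  have h3 := integral_im hfi
  have h3' := integral_im hfi'
  simp only [RCLike.re_to_complex, RCLike.im_to_complex] at h1 h1' h3 h3'
  apply Complex.ext
  · rw [← h1, ← h1']
    exact integral_inv_eq_self_real μ (fun x => (f x).re) (Complex.continuous_re.comp hf)
      (h2.comp_left rfl)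
  · rw [← h3, ← h3']
    exact integral_inv_eq_self_real μ (fun x => (f x).im) (Complex.continuous_im.comp hf)
      (h2.comp_left rfl)

variable {X : Type*} [TopologicalSpace X] [T2Space X]

lemma param_integral_continuous (F : X → G → ℂ) (hF : Continuous (Function.uncurry F))
    (h2 : HasCompactSupport (Function.uncurry F)) :
    Continuous (fun x => ∫ y, F x y ∂μ) := by
  have hk : IsCompact (Prod.snd '' tsupport (Function.uncurry F)) := h2.image continuous_snd
  have := continuousOn_integral_bilinear_of_locally_integrable_of_compact_support
    (ContinuousLinearMap.mul ℂ ℂ) (f := F) (s := Set.univ)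
    (k := Prod.snd '' tsupport (Function.uncurry F)) (g := fun _ => (1 : ℂ)) (μ := μ)
    hk (hF.continuousOn) (fun p x _ hx => ?_) ?_
  · simp only [ContinuousLinearMap.mul_apply', one_mul] at this
    rw [← continuousOn_univ]
    exact this
  · by_contra h0
    exact hx ⟨(p, x), subset_tsupport _ h0, rfl⟩
  · exact integrableOn_const hk.measure_lt_top.ne

lemma param_integral_hcs (F : X → G → ℂ) (h2 : HasCompactSupport (Function.uncurry F)) :
    HasCompactSupport (fun x => ∫ y, F x y ∂μ) := by
  apply hcs_of (h2.image continuous_fst)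
  intro x hx
  have : ∃ y, F x y ≠ 0 := by
    by_contra h0
    push_neg at h0
    simp only [h0, integral_zero] at hx
    exact hx rfl
  obtain ⟨y, hy⟩ := this
  exact ⟨(x, y), subset_tsupport _ hy, rfl⟩

lemma param_integral_integrable (F : X → G → ℂ) : Integrable (fun y => F x y) μ → True := fun _ => trivial

lemma my_swap (F : G → G → ℂ) (hF : Continuous (Function.uncurry F))
    (h2 : HasCompactSupport (Function.uncurry F)) :
    ∫ x, ∫ y, F x y ∂μ ∂μ = ∫ y, ∫ x, F x y ∂μ ∂μ :=
  integral_integral_swap_of_hasCompactSupport hF h2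

end TauHelpers

section Cyclic

variable {G : Type*} [Group G] [TopologicalSpace G] [IsTopologicalGroup G] [T2Space G]
    [LocallyCompactSpace G] [MeasurableSpace G] [BorelSpace G]
    (μ : Measure G) [μ.IsHaarMeasure] [μ.IsMulRightInvariant]
    (c : G → G → G → ℂ)

lemma cont_c3 {α : Type*} [TopologicalSpace α]
    (c_cont : Continuous fun p : G × G × G => c p.1 p.2.1 p.2.2)
    {u v w : α → G} (hu : Continuous u) (hv : Continuous v) (hw : Continuous w) :
    Continuous fun a => c (u a) (v a) (w a) :=
  c_cont.comp (hu.prodMk (hv.prodMk hw))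

lemma tau_abform (f₀ f₁ f₂ : G → ℂ) :
    tauOf μ c f₀ f₁ f₂ = ∫ a, ∫ b, c 1 a b * f₀ b⁻¹ * f₁ a * f₂ (a⁻¹ * b) ∂μ ∂μ := by
  unfold tauOf
  refine integral_congr_ae (Filter.Eventually.of_forall fun a => ?_)
  beta_reduce
  have h := integral_mul_left_eq_self (μ := μ)
    (fun b => c 1 a b * f₀ b⁻¹ * f₁ a * f₂ (a⁻¹ * b)) a
  rw [← h]
  refine integral_congr_ae (Filter.Eventually.of_forall fun b => ?_)
  beta_reduce
  simp [inv_mul_cancel_left]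

lemma tau_cyclic
    (c_cont : Continuous fun p : G × G × G => c p.1 p.2.1 p.2.2)
    (c_inv : ∀ g g₀ g₁ g₂ : G, c (g * g₀) (g * g₁) (g * g₂) = c g₀ g₁ g₂)
    (c_cyc : ∀ g₀ g₁ g₂ : G, c g₀ g₁ g₂ = c g₂ g₀ g₁)
    (f₀ f₁ f₂ : G → ℂ)
    (hf₀ : Continuous f₀) (h2f₀ : HasCompactSupport f₀)
    (hf₁ : Continuous f₁) (h2f₁ : HasCompactSupport f₁)
    (hf₂ : Continuous f₂) (h2f₂ : HasCompactSupport f₂) :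
    tauOf μ c f₀ f₁ f₂ = tauOf μ c f₂ f₀ f₁ := by
  rw [tau_abform μ c f₀ f₁ f₂, tau_abform μ c f₂ f₀ f₁]
  calc
    ∫ a, ∫ b, c 1 a b * f₀ b⁻¹ * f₁ a * f₂ (a⁻¹ * b) ∂μ ∂μ
        = ∫ b, ∫ a, c 1 a b * f₀ b⁻¹ * f₁ a * f₂ (a⁻¹ * b) ∂μ ∂μ := by
      apply my_swap μ (fun a b => c 1 a b * f₀ b⁻¹ * f₁ a * f₂ (a⁻¹ * b))
      · exact (((cont_c3 c c_cont continuous_const continuous_fst continuous_snd).mul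
          (hf₀.comp continuous_snd.inv)).mul (hf₁.comp continuous_fst)).mul
          (hf₂.comp (continuous_fst.inv.mul continuous_snd))
      · apply hcs_of (h2f₁.prod h2f₀.inv)
        intro p hp
        simp only [ne_eq, mul_eq_zero, not_or, Function.uncurry] at hp
        obtain ⟨⟨⟨-, h0⟩, h1⟩, -⟩ := hp
        exact Set.mem_prod.2 ⟨subset_tsupport _ h1,
          Set.mem_inv.2 (subset_tsupport _ h0)⟩
    _ = ∫ b, ∫ a, c 1 (b * a) b * f₀ b⁻¹ * f₁ (b * a) * f₂ a⁻¹ ∂μ ∂μ := by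
      refine integral_congr_ae (Filter.Eventually.of_forall fun b => ?_)
      beta_reduce
      rw [← integral_mul_left_eq_self (μ := μ)
        (fun x => c 1 x b * f₀ b⁻¹ * f₁ x * f₂ (x⁻¹ * b)) b]
      refine integral_congr_ae (Filter.Eventually.of_forall fun a => ?_)
      beta_reduce
      simp [mul_inv_rev, mul_assoc]
    _ = ∫ b, ∫ a, c 1 (b⁻¹ * a) b⁻¹ * f₀ b * f₁ (b⁻¹ * a) * f₂ a⁻¹ ∂μ ∂μ := by
      have hcont : Continuous (fun b => ∫ a, c 1 (b * a) b * f₀ b⁻¹ * f₁ (b * a) * f₂ a⁻¹ ∂μ) := by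
        apply param_integral_continuous μ
        · exact (((cont_c3 c c_cont continuous_const (continuous_fst.mul continuous_snd)
            continuous_fst).mul (hf₀.comp continuous_fst.inv)).mul
            (hf₁.comp (continuous_fst.mul continuous_snd))).mul
            (hf₂.comp continuous_snd.inv)
        · apply hcs_of (h2f₀.inv.prod h2f₂.inv)
          intro p hp
          simp only [ne_eq, mul_eq_zero, not_or, Function.uncurry] at hp
          obtain ⟨⟨⟨-, h0⟩, -⟩, h2⟩ := hp
          exact Set.mem_prod.2 ⟨Set.mem_inv.2 (subset_tsupport _ h0),
            Set.mem_inv.2 (subset_tsupport _ h2)⟩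
      have hhcs : HasCompactSupport
          (fun b => ∫ a, c 1 (b * a) b * f₀ b⁻¹ * f₁ (b * a) * f₂ a⁻¹ ∂μ) := by
        apply param_integral_hcs μ
        apply hcs_of (h2f₀.inv.prod h2f₂.inv)
        intro p hp
        simp only [ne_eq, mul_eq_zero, not_or, Function.uncurry] at hp
        obtain ⟨⟨⟨-, h0⟩, -⟩, h2⟩ := hp
        exact Set.mem_prod.2 ⟨Set.mem_inv.2 (subset_tsupport _ h0),
          Set.mem_inv.2 (subset_tsupport _ h2)⟩
      rw [← integral_inv_eq_self_cc μ _ hcont hhcs]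
      refine integral_congr_ae (Filter.Eventually.of_forall fun b => ?_)
      beta_reduce
      simp only [inv_inv]
    _ = ∫ a, ∫ b, c 1 a b * f₂ b⁻¹ * f₀ a * f₁ (a⁻¹ * b) ∂μ ∂μ := by
      refine integral_congr_ae (Filter.Eventually.of_forall fun a => ?_)
      beta_reduce
      refine integral_congr_ae (Filter.Eventually.of_forall fun b => ?_)
      beta_reduce
      have h1 := c_inv a 1 (a⁻¹ * b) a⁻¹
      simp only [mul_one, mul_inv_cancel_left, mul_inv_cancel] at h1
      rw [← h1, c_cyc a b 1]
      ring

end Cyclic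

lemma integral_comb {α : Type*} [MeasurableSpace α] {ν : MeasureTheory.Measure α}
    (F1 F2 F3 F4 : α → ℂ) (h1 : Integrable F1 ν) (h2 : Integrable F2 ν)
    (h3 : Integrable F3 ν) (h4 : Integrable F4 ν) :
    ∫ x, (F1 x - F2 x + F3 x - F4 x) ∂ν
      = (∫ x, F1 x ∂ν) - (∫ x, F2 x ∂ν) + (∫ x, F3 x ∂ν) - (∫ x, F4 x ∂ν) := by
  have e1 := integral_sub h1 h2
  have e2 := integral_add (h1.sub h2) h3
  have e3 := integral_sub ((h1.sub h2).add h3) h4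
  have e0 : ∫ x, (F1 x - F2 x + F3 x - F4 x) ∂ν = ∫ x, (F1 - F2 + F3) x - F4 x ∂ν :=
    integral_congr_ae (Filter.Eventually.of_forall fun x => by simp)
  have e2' : ∫ x, (F1 - F2 + F3) x ∂ν = ∫ x, (F1 - F2) x + F3 x ∂ν :=
    integral_congr_ae (Filter.Eventually.of_forall fun x => by simp)
  have e1' : ∫ x, (F1 - F2) x ∂ν = ∫ x, F1 x - F2 x ∂ν :=
    integral_congr_ae (Filter.Eventually.of_forall fun x => by simp)
  rw [e0, e3, e2', e2, e1', e1]

section Hochschild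

variable {G : Type*} [Group G] [TopologicalSpace G] [IsTopologicalGroup G] [T2Space G]
    [LocallyCompactSpace G] [MeasurableSpace G] [BorelSpace G]
    (μ : Measure G) [μ.IsHaarMeasure] [μ.IsMulRightInvariant]
    (c : G → G → G → ℂ)

lemma tau_hochschild
    (c_cont : Continuous fun p : G × G × G => c p.1 p.2.1 p.2.2)
    (c_inv : ∀ g g₀ g₁ g₂ : G, c (g * g₀) (g * g₁) (g * g₂) = c g₀ g₁ g₂)
    (c_cocycle : ∀ g₀ g₁ g₂ g₃ : G,
      c g₁ g₂ g₃ - c g₀ g₂ g₃ + c g₀ g₁ g₃ - c g₀ g₁ g₂ = 0)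
    (f₀ f₁ f₂ f₃ : G → ℂ)
    (hf₀ : Continuous f₀) (h2f₀ : HasCompactSupport f₀)
    (hf₁ : Continuous f₁) (h2f₁ : HasCompactSupport f₁)
    (hf₂ : Continuous f₂) (h2f₂ : HasCompactSupport f₂)
    (hf₃ : Continuous f₃) (h2f₃ : HasCompactSupport f₃) :
    tauOf μ c (groupConv μ f₀ f₁) f₂ f₃ - tauOf μ c f₀ (groupConv μ f₁ f₂) f₃
      + tauOf μ c f₀ f₁ (groupConv μ f₂ f₃) - tauOf μ c (groupConv μ f₃ f₀) f₁ f₂ = 0 := by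
  -- the integrability package for canonical-form integrands
  have pack : ∀ (d : G → G → G → ℂ), (Continuous fun p : G × G × G => d p.1 p.2.1 p.2.2) →
      (∀ x y : G, Integrable
        (fun z => d x y z * f₀ ((x*(y*z))⁻¹) * f₁ x * f₂ y * f₃ z) μ) ∧
      (∀ x : G, Integrable
        (fun y => ∫ z, d x y z * f₀ ((x*(y*z))⁻¹) * f₁ x * f₂ y * f₃ z ∂μ) μ) ∧
      Integrable
        (fun x => ∫ y, ∫ z, d x y z * f₀ ((x*(y*z))⁻¹) * f₁ x * f₂ y * f₃ z ∂μ ∂μ) μ := by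
    intro d hd
    have hk : Continuous (fun p : G × G × G =>
        d p.1 p.2.1 p.2.2 * f₀ ((p.1*(p.2.1*p.2.2))⁻¹) * f₁ p.1 * f₂ p.2.1 * f₃ p.2.2) :=
      (((hd.mul (hf₀.comp (by fun_prop))).mul (hf₁.comp continuous_fst)).mul
        (hf₂.comp (continuous_fst.comp continuous_snd))).mul
        (hf₃.comp (continuous_snd.comp continuous_snd))
    have hkyz : ∀ x : G, Continuous (Function.uncurry fun y z =>
        d x y z * f₀ ((x*(y*z))⁻¹) * f₁ x * f₂ y * f₃ z) := fun x =>
      by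
        have h1 : Continuous fun q : G × G => ((x, q.1, q.2) : G × G × G) := by fun_prop
        have := hk.comp h1
        exact this
    have h2kyz : ∀ x : G, HasCompactSupport (Function.uncurry fun y z =>
        d x y z * f₀ ((x*(y*z))⁻¹) * f₁ x * f₂ y * f₃ z) := by
      intro x
      apply hcs_of (h2f₂.prod h2f₃)
      intro p hp
      simp only [ne_eq, mul_eq_zero, not_or, Function.uncurry] at hp
      exact Set.mem_prod.2 ⟨subset_tsupport _ hp.1.2, subset_tsupport _ hp.2⟩
    have hkxy : Continuous (Function.uncurry fun x y =>
        ∫ z, d x y z * f₀ ((x*(y*z))⁻¹) * f₁ x * f₂ y * f₃ z ∂μ) := by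
      apply param_integral_continuous μ (fun q : G × G => fun z =>
        d q.1 q.2 z * f₀ ((q.1*(q.2*z))⁻¹) * f₁ q.1 * f₂ q.2 * f₃ z)
      · have h1 : Continuous fun r : (G × G) × G =>
            ((r.1.1, r.1.2, r.2) : G × G × G) := by fun_prop
        have := hk.comp h1
        exact this
      · apply hcs_of ((h2f₁.prod h2f₂).prod h2f₃)
        intro p hp
        simp only [ne_eq, mul_eq_zero, not_or, Function.uncurry] at hp
        exact Set.mem_prod.2 ⟨Set.mem_prod.2 ⟨subset_tsupport _ hp.1.1.2,
          subset_tsupport _ hp.1.2⟩, subset_tsupport _ hp.2⟩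
    have h2kxy : HasCompactSupport (Function.uncurry fun x y =>
        ∫ z, d x y z * f₀ ((x*(y*z))⁻¹) * f₁ x * f₂ y * f₃ z ∂μ) := by
      apply param_integral_hcs μ (fun q : G × G => fun z =>
        d q.1 q.2 z * f₀ ((q.1*(q.2*z))⁻¹) * f₁ q.1 * f₂ q.2 * f₃ z)
      apply hcs_of ((h2f₁.prod h2f₂).prod h2f₃)
      intro p hp
      simp only [ne_eq, mul_eq_zero, not_or, Function.uncurry] at hp
      exact Set.mem_prod.2 ⟨Set.mem_prod.2 ⟨subset_tsupport _ hp.1.1.2,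
        subset_tsupport _ hp.1.2⟩, subset_tsupport _ hp.2⟩
    refine ⟨fun x y => ?_, fun x => ?_, ?_⟩
    · apply Continuous.integrable_of_hasCompactSupport
      · have h1 : Continuous fun z : G => ((x, y, z) : G × G × G) := by fun_prop
        have := hk.comp h1
        exact this
      · apply hcs_of h2f₃
        intro z hz
        simp only [ne_eq, mul_eq_zero, not_or] at hz
        exact subset_tsupport _ hz.2
    · apply Continuous.integrable_of_hasCompactSupport
      · exact param_integral_continuous μ _ (hkyz x) (h2kyz x)
      · exact param_integral_hcs μ _ (h2kyz x)
    · apply Continuous.integrable_of_hasCompactSupport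
      · exact param_integral_continuous μ _ hkxy h2kxy
      · exact param_integral_hcs μ _ h2kxy
  -- Term D
  have hD : tauOf μ c (groupConv μ f₃ f₀) f₁ f₂
      = ∫ x, ∫ y, ∫ z, c 1 x (x*y) * f₀ ((x*(y*z))⁻¹) * f₁ x * f₂ y * f₃ z ∂μ ∂μ ∂μ := by
    unfold tauOf groupConv
    refine integral_congr_ae (Filter.Eventually.of_forall fun x => ?_)
    beta_reduce
    refine integral_congr_ae (Filter.Eventually.of_forall fun y => ?_)
    beta_reduce
    calc c 1 x (x*y) * (∫ g, f₃ g * f₀ (g⁻¹ * (x*y)⁻¹) ∂μ) * f₁ x * f₂ y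
        = (∫ g, f₃ g * f₀ (g⁻¹ * (x*y)⁻¹) ∂μ) * (c 1 x (x*y) * f₁ x * f₂ y) := by ring
      _ = ∫ z, f₃ z * f₀ (z⁻¹ * (x*y)⁻¹) * (c 1 x (x*y) * f₁ x * f₂ y) ∂μ := by
          rw [integral_mul_const]
      _ = ∫ z, c 1 x (x*y) * f₀ ((x*(y*z))⁻¹) * f₁ x * f₂ y * f₃ z ∂μ := by
          refine integral_congr_ae (Filter.Eventually.of_forall fun z => ?_)
          beta_reduce
          have h : (x*(y*z))⁻¹ = z⁻¹ * (x*y)⁻¹ := by group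
          rw [h]; ring
  -- Term C
  have hC : tauOf μ c f₀ f₁ (groupConv μ f₂ f₃)
      = ∫ x, ∫ y, ∫ z, c 1 x (x*(y*z)) * f₀ ((x*(y*z))⁻¹) * f₁ x * f₂ y * f₃ z ∂μ ∂μ ∂μ := by
    unfold tauOf groupConv
    refine integral_congr_ae (Filter.Eventually.of_forall fun x => ?_)
    beta_reduce
    calc ∫ w, c 1 x (x*w) * f₀ ((x*w)⁻¹) * f₁ x * (∫ y, f₂ y * f₃ (y⁻¹ * w) ∂μ) ∂μ
        = ∫ w, ∫ y, c 1 x (x*w) * f₀ ((x*w)⁻¹) * f₁ x * (f₂ y * f₃ (y⁻¹ * w)) ∂μ ∂μ := by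
          refine integral_congr_ae (Filter.Eventually.of_forall fun w => ?_)
          beta_reduce
          rw [integral_const_mul]
      _ = ∫ y, ∫ w, c 1 x (x*w) * f₀ ((x*w)⁻¹) * f₁ x * (f₂ y * f₃ (y⁻¹ * w)) ∂μ ∂μ := by
          apply my_swap μ (fun w y => c 1 x (x*w) * f₀ ((x*w)⁻¹) * f₁ x * (f₂ y * f₃ (y⁻¹ * w)))
          · exact (((cont_c3 c c_cont continuous_const continuous_const
              (continuous_const.mul continuous_fst)).mul
              (hf₀.comp (continuous_const.mul continuous_fst).inv)).mul
              (hf₁.comp continuous_const)).mul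
              ((hf₂.comp continuous_snd).mul (hf₃.comp (continuous_snd.inv.mul continuous_fst)))
          · apply hcs_of ((h2f₂.mul h2f₃).prod h2f₂)
            intro p hp
            simp only [ne_eq, mul_eq_zero, not_or, Function.uncurry] at hp
            obtain ⟨-, h2, h3⟩ := hp
            refine Set.mem_prod.2 ⟨?_, subset_tsupport _ h2⟩
            have : p.1 = p.2 * (p.2⁻¹ * p.1) := by group
            rw [this]
            exact Set.mul_mem_mul (subset_tsupport _ h2) (subset_tsupport _ h3)
      _ = ∫ y, ∫ z, c 1 x (x*(y*z)) * f₀ ((x*(y*z))⁻¹) * f₁ x * f₂ y * f₃ z ∂μ ∂μ := by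
          refine integral_congr_ae (Filter.Eventually.of_forall fun y => ?_)
          beta_reduce
          rw [← integral_mul_left_eq_self (μ := μ)
            (fun w => c 1 x (x*w) * f₀ ((x*w)⁻¹) * f₁ x * (f₂ y * f₃ (y⁻¹ * w))) y]
          refine integral_congr_ae (Filter.Eventually.of_forall fun z => ?_)
          beta_reduce
          simp only [inv_mul_cancel_left]
          ring
  -- properties of the partial integral Φ appearing in term B
  have hPhiCont : Continuous (fun a => ∫ w, c 1 a (a*w) * f₀ ((a*w)⁻¹) * f₃ w ∂μ) := by
    apply param_integral_continuous μ (fun a w => c 1 a (a*w) * f₀ ((a*w)⁻¹) * f₃ w)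
    · exact ((cont_c3 c c_cont continuous_const continuous_fst
        (continuous_fst.mul continuous_snd)).mul
        (hf₀.comp (continuous_fst.mul continuous_snd).inv)).mul (hf₃.comp continuous_snd)
    · apply hcs_of (((h2f₀.inv).mul (h2f₃.inv)).prod h2f₃)
      intro p hp
      simp only [ne_eq, mul_eq_zero, not_or, Function.uncurry] at hp
      obtain ⟨⟨-, h0⟩, h3⟩ := hp
      refine Set.mem_prod.2 ⟨?_, subset_tsupport _ h3⟩
      have : p.1 = (p.1 * p.2) * p.2⁻¹ := by group
      rw [this]
      exact Set.mul_mem_mul (Set.mem_inv.2 (subset_tsupport _ h0))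
        (Set.inv_mem_inv.2 (subset_tsupport _ h3))
  have hPhiHCS : HasCompactSupport (fun a => ∫ w, c 1 a (a*w) * f₀ ((a*w)⁻¹) * f₃ w ∂μ) := by
    apply param_integral_hcs μ (fun a w => c 1 a (a*w) * f₀ ((a*w)⁻¹) * f₃ w)
    apply hcs_of (((h2f₀.inv).mul (h2f₃.inv)).prod h2f₃)
    intro p hp
    simp only [ne_eq, mul_eq_zero, not_or, Function.uncurry] at hp
    obtain ⟨⟨-, h0⟩, h3⟩ := hp
    refine Set.mem_prod.2 ⟨?_, subset_tsupport _ h3⟩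
    have : p.1 = (p.1 * p.2) * p.2⁻¹ := by group
    rw [this]
    exact Set.mul_mem_mul (Set.mem_inv.2 (subset_tsupport _ h0))
      (Set.inv_mem_inv.2 (subset_tsupport _ h3))
  -- Term B
  have hB : tauOf μ c f₀ (groupConv μ f₁ f₂) f₃
      = ∫ x, ∫ y, ∫ z, c 1 (x*y) (x*(y*z)) * f₀ ((x*(y*z))⁻¹) * f₁ x * f₂ y * f₃ z ∂μ ∂μ ∂μ := by
    unfold tauOf groupConv
    calc ∫ a, ∫ w, c 1 a (a*w) * f₀ ((a*w)⁻¹) * ((fun x => ∫ g, f₁ g * f₂ (g⁻¹ * x) ∂μ) a) * f₃ w ∂μ ∂μ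
        = ∫ a, ∫ g, f₁ g * f₂ (g⁻¹ * a) * (∫ w, c 1 a (a*w) * f₀ ((a*w)⁻¹) * f₃ w ∂μ) ∂μ ∂μ := by
          refine integral_congr_ae (Filter.Eventually.of_forall fun a => ?_)
          beta_reduce
          calc ∫ w, c 1 a (a*w) * f₀ ((a*w)⁻¹) * (∫ g, f₁ g * f₂ (g⁻¹ * a) ∂μ) * f₃ w ∂μ
              = ∫ w, (∫ g, f₁ g * f₂ (g⁻¹ * a) ∂μ) * (c 1 a (a*w) * f₀ ((a*w)⁻¹) * f₃ w) ∂μ := by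
                refine integral_congr_ae (Filter.Eventually.of_forall fun w => ?_)
                beta_reduce
                ring
            _ = (∫ g, f₁ g * f₂ (g⁻¹ * a) ∂μ) * (∫ w, c 1 a (a*w) * f₀ ((a*w)⁻¹) * f₃ w ∂μ) := by
                rw [integral_const_mul]
            _ = ∫ g, f₁ g * f₂ (g⁻¹ * a) * (∫ w, c 1 a (a*w) * f₀ ((a*w)⁻¹) * f₃ w ∂μ) ∂μ := by
                rw [integral_mul_const]
      _ = ∫ g, ∫ a, f₁ g * f₂ (g⁻¹ * a) * (∫ w, c 1 a (a*w) * f₀ ((a*w)⁻¹) * f₃ w ∂μ) ∂μ ∂μ := by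
          apply my_swap μ
            (fun a g => f₁ g * f₂ (g⁻¹ * a) * (∫ w, c 1 a (a*w) * f₀ ((a*w)⁻¹) * f₃ w ∂μ))
          · exact ((hf₁.comp continuous_snd).mul
              (hf₂.comp (continuous_snd.inv.mul continuous_fst))).mul
              (hPhiCont.comp continuous_fst)
          · apply hcs_of (((h2f₁.mul h2f₂)).prod h2f₁)
            intro p hp
            simp only [ne_eq, mul_eq_zero, not_or, Function.uncurry] at hp
            obtain ⟨⟨h1, h2⟩, -⟩ := hp
            refine Set.mem_prod.2 ⟨?_, subset_tsupport _ h1⟩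
            have : p.1 = p.2 * (p.2⁻¹ * p.1) := by group
            rw [this]
            exact Set.mul_mem_mul (subset_tsupport _ h1) (subset_tsupport _ h2)
      _ = ∫ x, ∫ y, f₁ x * f₂ y * (∫ w, c 1 (x*y) ((x*y)*w) * f₀ (((x*y)*w)⁻¹) * f₃ w ∂μ) ∂μ ∂μ := by
          refine integral_congr_ae (Filter.Eventually.of_forall fun x => ?_)
          beta_reduce
          rw [← integral_mul_left_eq_self (μ := μ)
            (fun a => f₁ x * f₂ (x⁻¹ * a) * (∫ w, c 1 a (a*w) * f₀ ((a*w)⁻¹) * f₃ w ∂μ)) x]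
          refine integral_congr_ae (Filter.Eventually.of_forall fun y => ?_)
          beta_reduce
          simp only [inv_mul_cancel_left]
      _ = ∫ x, ∫ y, ∫ z, c 1 (x*y) (x*(y*z)) * f₀ ((x*(y*z))⁻¹) * f₁ x * f₂ y * f₃ z ∂μ ∂μ ∂μ := by
          refine integral_congr_ae (Filter.Eventually.of_forall fun x => ?_)
          beta_reduce
          refine integral_congr_ae (Filter.Eventually.of_forall fun y => ?_)
          beta_reduce
          rw [← integral_const_mul]
          refine integral_congr_ae (Filter.Eventually.of_forall fun z => ?_)
          beta_reduce
          have h : (x*y)*z = x*(y*z) := by group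
          rw [h]
          ring
  -- the convolution in slot 0 rewritten by unimodularity
  have conv01 : ∀ w : G, (∫ g, f₀ g * f₁ (g⁻¹ * w⁻¹) ∂μ) = ∫ x, f₀ ((x*w)⁻¹) * f₁ x ∂μ := by
    intro w
    have hF : Continuous (fun g => f₀ g * f₁ (g⁻¹ * w⁻¹)) :=
      hf₀.mul (hf₁.comp (continuous_inv.mul continuous_const))
    have h2F : HasCompactSupport (fun g => f₀ g * f₁ (g⁻¹ * w⁻¹)) := by
      apply hcs_of h2f₀
      intro g hg
      simp only [ne_eq, mul_eq_zero, not_or] at hg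
      exact subset_tsupport _ hg.1
    calc ∫ g, f₀ g * f₁ (g⁻¹ * w⁻¹) ∂μ
        = ∫ g, f₀ g⁻¹ * f₁ (g⁻¹⁻¹ * w⁻¹) ∂μ := (integral_inv_eq_self_cc μ _ hF h2F).symm
      _ = ∫ x, f₀ ((x*w)⁻¹) * f₁ x ∂μ := by
          rw [← integral_mul_right_eq_self (μ := μ) (fun g => f₀ g⁻¹ * f₁ (g⁻¹⁻¹ * w⁻¹)) w]
          refine integral_congr_ae (Filter.Eventually.of_forall fun x => ?_)
          beta_reduce
          have h1 : ((x*w)⁻¹)⁻¹ * w⁻¹ = x := by group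
          rw [h1]
  -- Term A
  have hA : tauOf μ c (groupConv μ f₀ f₁) f₂ f₃
      = ∫ x, ∫ y, ∫ z, c 1 y (y*z) * f₀ ((x*(y*z))⁻¹) * f₁ x * f₂ y * f₃ z ∂μ ∂μ ∂μ := by
    unfold tauOf groupConv
    calc ∫ a, ∫ w, c 1 a (a*w) * ((fun x => ∫ g, f₀ g * f₁ (g⁻¹ * x) ∂μ) ((a*w)⁻¹)) * f₂ a * f₃ w ∂μ ∂μ
        = ∫ a, ∫ w, ∫ x, c 1 a (a*w) * (f₀ ((x*(a*w))⁻¹) * f₁ x) * f₂ a * f₃ w ∂μ ∂μ ∂μ := by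
          refine integral_congr_ae (Filter.Eventually.of_forall fun a => ?_)
          beta_reduce
          refine integral_congr_ae (Filter.Eventually.of_forall fun w => ?_)
          beta_reduce
          rw [conv01 (a*w)]
          rw [integral_mul_const, integral_mul_const, integral_const_mul]
      _ = ∫ a, ∫ x, ∫ w, c 1 a (a*w) * (f₀ ((x*(a*w))⁻¹) * f₁ x) * f₂ a * f₃ w ∂μ ∂μ ∂μ := by
          refine integral_congr_ae (Filter.Eventually.of_forall fun a => ?_)
          beta_reduce
          apply my_swap μ
            (fun w x => c 1 a (a*w) * (f₀ ((x*(a*w))⁻¹) * f₁ x) * f₂ a * f₃ w)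
          · exact (((cont_c3 c c_cont continuous_const continuous_const
              (continuous_const.mul continuous_fst)).mul
              ((hf₀.comp (continuous_snd.mul (continuous_const.mul continuous_fst)).inv).mul
                (hf₁.comp continuous_snd))).mul continuous_const).mul
              (hf₃.comp continuous_fst)
          · apply hcs_of (h2f₃.prod h2f₁)
            intro p hp
            simp only [ne_eq, mul_eq_zero, not_or, Function.uncurry] at hp
            exact Set.mem_prod.2 ⟨subset_tsupport _ hp.2, subset_tsupport _ hp.1.1.2.2⟩
      _ = ∫ x, ∫ a, ∫ w, c 1 a (a*w) * (f₀ ((x*(a*w))⁻¹) * f₁ x) * f₂ a * f₃ w ∂μ ∂μ ∂μ := by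
          have hF2cont : Continuous (Function.uncurry fun a x =>
              ∫ w, c 1 a (a*w) * (f₀ ((x*(a*w))⁻¹) * f₁ x) * f₂ a * f₃ w ∂μ) := by
            apply param_integral_continuous μ (fun q : G × G => fun w =>
              c 1 q.1 (q.1*w) * (f₀ ((q.2*(q.1*w))⁻¹) * f₁ q.2) * f₂ q.1 * f₃ w)
            · exact (((cont_c3 c c_cont continuous_const (continuous_fst.comp continuous_fst)
                ((continuous_fst.comp continuous_fst).mul continuous_snd)).mul
                ((hf₀.comp ((continuous_snd.comp continuous_fst).mul
                  ((continuous_fst.comp continuous_fst).mul continuous_snd)).inv).mul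
                  (hf₁.comp (continuous_snd.comp continuous_fst)))).mul
                (hf₂.comp (continuous_fst.comp continuous_fst))).mul
                (hf₃.comp continuous_snd)
            · apply hcs_of ((h2f₂.prod h2f₁).prod h2f₃)
              intro p hp
              simp only [ne_eq, mul_eq_zero, not_or, Function.uncurry] at hp
              exact Set.mem_prod.2 ⟨Set.mem_prod.2 ⟨subset_tsupport _ hp.1.2,
                subset_tsupport _ hp.1.1.2.2⟩, subset_tsupport _ hp.2⟩
          have hF2hcs : HasCompactSupport (Function.uncurry fun a x =>
              ∫ w, c 1 a (a*w) * (f₀ ((x*(a*w))⁻¹) * f₁ x) * f₂ a * f₃ w ∂μ) := by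
            apply param_integral_hcs μ (fun q : G × G => fun w =>
              c 1 q.1 (q.1*w) * (f₀ ((q.2*(q.1*w))⁻¹) * f₁ q.2) * f₂ q.1 * f₃ w)
            apply hcs_of ((h2f₂.prod h2f₁).prod h2f₃)
            intro p hp
            simp only [ne_eq, mul_eq_zero, not_or, Function.uncurry] at hp
            exact Set.mem_prod.2 ⟨Set.mem_prod.2 ⟨subset_tsupport _ hp.1.2,
              subset_tsupport _ hp.1.1.2.2⟩, subset_tsupport _ hp.2⟩
          exact my_swap μ (fun a x =>
            ∫ w, c 1 a (a*w) * (f₀ ((x*(a*w))⁻¹) * f₁ x) * f₂ a * f₃ w ∂μ) hF2cont hF2hcs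
      _ = ∫ x, ∫ y, ∫ z, c 1 y (y*z) * f₀ ((x*(y*z))⁻¹) * f₁ x * f₂ y * f₃ z ∂μ ∂μ ∂μ := by
          refine integral_congr_ae (Filter.Eventually.of_forall fun x => ?_)
          beta_reduce
          refine integral_congr_ae (Filter.Eventually.of_forall fun y => ?_)
          beta_reduce
          refine integral_congr_ae (Filter.Eventually.of_forall fun z => ?_)
          beta_reduce
          ring
  -- integrability of the four canonical integrands
  obtain ⟨zA, yA, xA⟩ := pack (fun x y z => c 1 y (y*z))
    (cont_c3 c c_cont continuous_const (by fun_prop) (by fun_prop))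
  obtain ⟨zB, yB, xB⟩ := pack (fun x y z => c 1 (x*y) (x*(y*z)))
    (cont_c3 c c_cont continuous_const (by fun_prop) (by fun_prop))
  obtain ⟨zC, yC, xC⟩ := pack (fun x y z => c 1 x (x*(y*z)))
    (cont_c3 c c_cont continuous_const (by fun_prop) (by fun_prop))
  obtain ⟨zD, yD, xD⟩ := pack (fun x y z => c 1 x (x*y))
    (cont_c3 c c_cont continuous_const (by fun_prop) (by fun_prop))
  rw [hA, hB, hC, hD]
  refine Eq.trans (integral_comb _ _ _ _ xA xB xC xD).symm ?_
  refine Eq.trans (integral_congr_ae (Filter.Eventually.of_forall fun x => ?_))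
    (integral_zero _ _)
  beta_reduce
  refine Eq.trans (integral_comb _ _ _ _ (yA x) (yB x) (yC x) (yD x)).symm ?_
  refine Eq.trans (integral_congr_ae (Filter.Eventually.of_forall fun y => ?_))
    (integral_zero _ _)
  beta_reduce
  refine Eq.trans (integral_comb _ _ _ _ (zA x y) (zB x y) (zC x y) (zD x y)).symm ?_
  refine Eq.trans (integral_congr_ae (Filter.Eventually.of_forall fun z => ?_))
    (integral_zero _ _)
  beta_reduce
  have hinv := c_inv x 1 y (y*z)
  rw [mul_one] at hinv
  have hco := c_cocycle 1 x (x*y) (x*(y*z))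
  linear_combination (f₀ ((x*(y*z))⁻¹) * f₁ x * f₂ y * f₃ z) * hco
    - (f₀ ((x*(y*z))⁻¹) * f₁ x * f₂ y * f₃ z) * hinv

end Hochschild


/-- Let `G` be a unimodular locally compact Hausdorff group with Haar
measure `μ`.  Let `c : G³ → ℂ` be continuous, left-invariant, cyclic and a homogeneous group
2-cocycle.  Then `τ_c` is a cyclic 2-cocycle on the convolution algebra `C_c(G)`:
it is cyclic, and its Hochschild coboundary vanishes. -/
theorem tauOf_is_cyclic_two_cocycle
    {G : Type*} [Group G] [TopologicalSpace G] [IsTopologicalGroup G] [T2Space G]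
    [LocallyCompactSpace G] [MeasurableSpace G] [BorelSpace G]
    (μ : Measure G) [μ.IsHaarMeasure] [μ.IsMulRightInvariant]
    (c : G → G → G → ℂ)
    (c_cont : Continuous fun p : G × G × G => c p.1 p.2.1 p.2.2)
    (c_inv : ∀ g g₀ g₁ g₂ : G, c (g * g₀) (g * g₁) (g * g₂) = c g₀ g₁ g₂)
    (c_cyc : ∀ g₀ g₁ g₂ : G, c g₀ g₁ g₂ = c g₂ g₀ g₁)
    (c_cocycle : ∀ g₀ g₁ g₂ g₃ : G,
      c g₁ g₂ g₃ - c g₀ g₂ g₃ + c g₀ g₁ g₃ - c g₀ g₁ g₂ = 0) :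
    (∀ f₀ f₁ f₂ : G → ℂ,
      Continuous f₀ → HasCompactSupport f₀ →
      Continuous f₁ → HasCompactSupport f₁ →
      Continuous f₂ → HasCompactSupport f₂ →
        tauOf μ c f₀ f₁ f₂ = tauOf μ c f₂ f₀ f₁) ∧
    (∀ f₀ f₁ f₂ f₃ : G → ℂ,
      Continuous f₀ → HasCompactSupport f₀ →
      Continuous f₁ → HasCompactSupport f₁ →
      Continuous f₂ → HasCompactSupport f₂ →
      Continuous f₃ → HasCompactSupport f₃ →
        tauOf μ c (groupConv μ f₀ f₁) f₂ f₃ - tauOf μ c f₀ (groupConv μ f₁ f₂) f₃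
          + tauOf μ c f₀ f₁ (groupConv μ f₂ f₃) - tauOf μ c (groupConv μ f₃ f₀) f₁ f₂ = 0) := by
  constructor
  · intro f₀ f₁ f₂ hf₀ h2f₀ hf₁ h2f₁ hf₂ h2f₂
    exact tau_cyclic μ c c_cont c_inv c_cyc f₀ f₁ f₂ hf₀ h2f₀ hf₁ h2f₁ hf₂ h2f₂
  · intro f₀ f₁ f₂ f₃ hf₀ h2f₀ hf₁ h2f₁ hf₂ h2f₂ hf₃ h2f₃
    exact tau_hochschild μ c c_cont c_inv c_cocycle f₀ f₁ f₂ f₃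
      hf₀ h2f₀ hf₁ h2f₁ hf₂ h2f₂ hf₃ h2f₃
end

section
/- For all Schwartz functions f₀, f₁, f₂ : ℝ² → ℂ, writing f̂ for the Fourier transform f̂(ξ) = ∫_{ℝ²} f(x) e^{−2πi⟨x,ξ⟩} dx, the following identity holds: ∫_{ℝ²} ∫_{ℝ²} f₀(−u−v) f₁(u) f₂(v) (u₁ v₂ − u₂ v₁) du dv = −(1/(4π²)) ∫_{ℝ²} f̂₀(ξ) (∂₁f̂₁(ξ) ∂₂f̂₂(ξ) − ∂₂f̂₁(ξ) ∂₁f̂₂(ξ)) dξ. In other words, after Fourier transform the cyclic 2-cocycle on the convolution algebra of ℝ² defined by the Euclidean area cocycle takes, up to a nonzero constant, the usual form ∫ f̂₀ df̂₁ ∧ df̂₂. -/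
open MeasureTheory SchwartzMap Real
open scoped FourierTransform RealInnerProductSpace

noncomputable section
namespace AreaAux

local notation "V2" => EuclideanSpace ℝ (Fin 2)

def coordMul (j : Fin 2) (f : 𝓢(V2, ℂ)) : 𝓢(V2, ℂ) :=
  bilinLeftCLM (ContinuousLinearMap.mul ℝ ℂ)
    ((Complex.ofRealCLM.comp (EuclideanSpace.proj (𝕜 := ℝ) j)).hasTemperateGrowth) f

lemma coordMul_apply (j : Fin 2) (f : 𝓢(V2, ℂ)) (x : V2) :
    coordMul j f x = f x * ((x j : ℝ) : ℂ) := rfl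

lemma mult_formula {f g : V2 → ℂ} (hf : Integrable f) (hg : Integrable g) :
    ∫ ξ : V2, 𝓕 f ξ * g ξ = ∫ x : V2, f x * 𝓕 g x := by
  have h := VectorFourier.integral_fourierIntegral_smul_eq_flip (e := 𝐞)
    (L := innerₗ V2) (μ := (volume : Measure V2)) (ν := (volume : Measure V2))
    Real.continuous_fourierChar (by simpa using (continuous_inner (𝕜 := ℝ) (E := V2))) hf hg
  change ∫ ξ : V2, VectorFourier.fourierIntegral 𝐞 volume (innerₗ V2) f ξ * g ξ =
    ∫ x : V2, f x * VectorFourier.fourierIntegral 𝐞 volume (innerₗ V2) g x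
  simpa [flip_innerₗ, smul_eq_mul] using h

lemma fourier_fourier (f : 𝓢(V2, ℂ)) (x : V2) : 𝓕 (𝓕 ⇑f) x = f (-x) := by
  have h : 𝓕⁻ (𝓕 ⇑f) = ⇑f :=
    f.continuous.fourierInv_fourier_eq f.integrable
      (by exact (𝓕 f).integrable)
  conv_rhs => rw [← h]
  rw [Real.fourierInv_eq_fourier_neg, neg_neg]

lemma schwartz_bound (f : 𝓢(V2, ℂ)) : ∃ C, ∀ x, ‖f x‖ ≤ C :=
  ⟨SchwartzMap.seminorm ℝ 0 0 f, fun x => by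
    simpa using SchwartzMap.le_seminorm ℝ 0 0 f x⟩

lemma integral_comp_neg_sub (c : V2) (F : V2 → ℂ) :
    (∫ x : V2, F (-c - x)) = ∫ x : V2, F x := by
  have h1 : (∫ x : V2, F (-c - x)) = ∫ x : V2, F (-c + x) := by
    rw [← integral_neg_eq_self (fun x : V2 => F (-c + x)) volume]
    simp [sub_eq_add_neg]
  rw [h1, integral_add_left_eq_self (μ := (volume : Measure V2)) (fun x : V2 => F x) (-c)]

lemma keyB (f₀ a b : 𝓢(V2, ℂ)) :
    (∫ u : V2, ∫ v : V2, f₀ (-u - v) * (a u * b v)) =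
      ∫ ξ : V2, 𝓕 ⇑f₀ ξ * (𝓕 ⇑a ξ * 𝓕 ⇑b ξ) := by
  have hFa : Integrable (𝓕 ⇑a) := by exact (𝓕 a).integrable
  have hFb : Integrable (𝓕 ⇑b) := by exact (𝓕 b).integrable
  have hCa : Continuous (𝓕 ⇑a) := by
    exact (𝓕 a).continuous
  have hBa : ∃ C, ∀ ξ, ‖𝓕 ⇑a ξ‖ ≤ C := by
    exact schwartz_bound (𝓕 a)
  have hBb : ∃ C, ∀ x, ‖b x‖ ≤ C := schwartz_bound b
  -- integrability of the product of Fourier transforms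
  have hGint : Integrable (fun ξ : V2 => 𝓕 ⇑a ξ * 𝓕 ⇑b ξ) :=
    hFb.bdd_mul hCa.aestronglyMeasurable (c := hBa.choose)
      (Filter.Eventually.of_forall hBa.choose_spec)
  -- step 2 : Fourier transform of the product
  have step2 : ∀ x : V2, 𝓕 (fun ξ : V2 => 𝓕 ⇑a ξ * 𝓕 ⇑b ξ) x
      = ∫ u : V2, a u * b (-u - x) := by
    intro x
    have hchar : Continuous (fun ξ : V2 => ((𝐞 (-⟪ξ, x⟫) : Circle) : ℂ)) := by
      exact continuous_subtype_val.comp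
        (Real.continuous_fourierChar.comp ((continuous_inner.comp
          (continuous_id.prodMk continuous_const)).neg))
    have hbx : Integrable (fun ξ : V2 => ((𝐞 (-⟪ξ, x⟫) : Circle) : ℂ) * 𝓕 ⇑b ξ) :=
      hFb.bdd_mul hchar.aestronglyMeasurable (c := 1) (Filter.Eventually.of_forall fun ξ => le_of_eq (Circle.norm_coe _))
    have e1 : 𝓕 (fun ξ : V2 => 𝓕 ⇑a ξ * 𝓕 ⇑b ξ) x
        = ∫ ξ : V2, 𝓕 ⇑a ξ * (((𝐞 (-⟪ξ, x⟫) : Circle) : ℂ) * 𝓕 ⇑b ξ) := by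
      rw [Real.fourier_eq]
      congr 1
      ext ξ
      simp only [Circle.smul_def, smul_eq_mul]
      ring
    have e2 := mult_formula (g := fun ξ : V2 => ((𝐞 (-⟪ξ, x⟫) : Circle) : ℂ) * 𝓕 ⇑b ξ)
      a.integrable hbx
    have e3 : ∀ u : V2, 𝓕 (fun ξ : V2 => ((𝐞 (-⟪ξ, x⟫) : Circle) : ℂ) * 𝓕 ⇑b ξ) u
        = b (-u - x) := by
      intro u
      have h4 : 𝓕 (fun ξ : V2 => ((𝐞 (-⟪ξ, x⟫) : Circle) : ℂ) * 𝓕 ⇑b ξ) u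
          = 𝓕 (𝓕 ⇑b) (u + x) := by
        rw [Real.fourier_eq, Real.fourier_eq]
        congr 1
        ext ξ
        simp only [Circle.smul_def, smul_eq_mul]
        rw [← mul_assoc, ← Circle.coe_mul, ← AddChar.map_add_eq_mul]
        congr 2
        rw [inner_add_right]
        ring_nf
        rfl
      rw [h4, fourier_fourier]
      congr 1
      abel
    rw [e1, e2]
    congr 1
    ext u
    rw [e3 u]
  -- step 1 : multiplication formula
  rw [mult_formula f₀.integrable hGint]
  simp_rw [step2]
  have pull : ∀ x : V2, f₀ x * ∫ u : V2, a u * b (-u - x)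
      = ∫ u : V2, f₀ x * (a u * b (-u - x)) :=
    fun x => (MeasureTheory.integral_const_mul _ _).symm
  simp_rw [pull]
  have base : Integrable (fun p : V2 × V2 => f₀ p.1 * a p.2)
      ((volume : Measure V2).prod volume) := f₀.integrable.mul_prod a.integrable
  have hmb : AEStronglyMeasurable (fun p : V2 × V2 => b (-p.2 - p.1))
      ((volume : Measure V2).prod volume) :=
    (b.continuous.comp ((continuous_snd.neg).sub continuous_fst)).aestronglyMeasurable
  have hQ : Integrable (fun p : V2 × V2 => b (-p.2 - p.1) * (f₀ p.1 * a p.2))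
      ((volume : Measure V2).prod volume) := by
    obtain ⟨C, hC⟩ := hBb
    exact base.bdd_mul hmb (Filter.Eventually.of_forall fun p => hC _)
  have hswap : Integrable (Function.uncurry fun x u : V2 => f₀ x * (a u * b (-u - x)))
      ((volume : Measure V2).prod volume) :=
    hQ.congr (Filter.Eventually.of_forall fun p => by simp [Function.uncurry]; ring)
  rw [integral_integral_swap hswap]
  congr 1
  ext u
  rw [← integral_comp_neg_sub u (fun x => f₀ x * (a u * b (-u - x)))]
  congr 1
  ext v
  have hv : -u - (-u - v) = v := by abel
  rw [hv]

lemma fderiv_fourier_single (f : 𝓢(V2, ℂ)) (j : Fin 2) (ξ : V2) :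
    fderiv ℝ (𝓕 ⇑f) ξ (EuclideanSpace.single j 1) =
      (-(2 * π * Complex.I)) * 𝓕 (⇑(coordMul j f)) ξ := by
  have h1 : Integrable (⇑f) := f.integrable
  have h2 : Integrable (fun v : V2 ↦ ‖v‖ * ‖f v‖) := by
    simpa using f.integrable_pow_mul volume 1
  have hint : Integrable (fun v ↦ VectorFourier.fourierSMulRight (innerSL ℝ) (⇑f) v) := by
    refine ((h2.const_mul (2 * π * ‖(innerSL ℝ (E := V2))‖)).mono'
      (f.continuous.aestronglyMeasurable.fourierSMulRight) ?_)
    filter_upwards with v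
    calc ‖VectorFourier.fourierSMulRight (innerSL ℝ) (⇑f) v‖
        ≤ 2 * π * ‖(innerSL ℝ (E := V2))‖ * ‖v‖ * ‖f v‖ :=
          VectorFourier.norm_fourierSMulRight_le _ _ _
      _ = 2 * π * ‖(innerSL ℝ (E := V2))‖ * (‖v‖ * ‖f v‖) := by ring
  rw [Real.fderiv_fourier h1 h2,
    Real.fourier_continuousLinearMap_apply hint,
    Real.fourier_eq, Real.fourier_eq, ← MeasureTheory.integral_const_mul]
  congr 1
  ext x
  have hx : ((innerSL ℝ) x) (EuclideanSpace.single j (1:ℝ)) = x j := by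
    simp [innerSL_apply_apply, PiLp.inner_apply, EuclideanSpace.single_apply]
  simp only [VectorFourier.fourierSMulRight_apply, coordMul_apply, Circle.smul_def,
    smul_eq_mul, Complex.real_smul]
  rw [hx]
  ring

lemma prod_integrable (f₀ a b : 𝓢(V2, ℂ)) :
    Integrable (fun p : V2 × V2 => f₀ (-p.1 - p.2) * (a p.1 * b p.2))
      ((volume : Measure V2).prod volume) := by
  have base : Integrable (fun p : V2 × V2 => a p.1 * b p.2)
      ((volume : Measure V2).prod volume) := a.integrable.mul_prod b.integrable
  have hm : AEStronglyMeasurable (fun p : V2 × V2 => f₀ (-p.1 - p.2))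
      ((volume : Measure V2).prod volume) :=
    (f₀.continuous.comp ((continuous_fst.neg).sub continuous_snd)).aestronglyMeasurable
  obtain ⟨C, hC⟩ := schwartz_bound f₀
  exact base.bdd_mul hm (Filter.Eventually.of_forall fun p => hC _)

lemma fourier_triple_integrable (f₀ a b : 𝓢(V2, ℂ)) :
    Integrable (fun ξ : V2 => 𝓕 ⇑f₀ ξ * (𝓕 ⇑a ξ * 𝓕 ⇑b ξ)) (volume : Measure V2) := by
  have hFb : Integrable (𝓕 ⇑b) := by exact (𝓕 b).integrable
  have hm : AEStronglyMeasurable (fun ξ : V2 => 𝓕 ⇑f₀ ξ * 𝓕 ⇑a ξ) (volume : Measure V2) := by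
    have c0 : Continuous (𝓕 ⇑f₀) := by exact (𝓕 f₀).continuous
    have ca : Continuous (𝓕 ⇑a) := by exact (𝓕 a).continuous
    exact (c0.mul ca).aestronglyMeasurable
  obtain ⟨C0, h0⟩ : ∃ C, ∀ ξ, ‖𝓕 ⇑f₀ ξ‖ ≤ C := by
    exact schwartz_bound (𝓕 f₀)
  obtain ⟨Ca, ha⟩ : ∃ C, ∀ ξ, ‖𝓕 ⇑a ξ‖ ≤ C := by
    exact schwartz_bound (𝓕 a)
  have hb : Integrable (fun ξ : V2 => (𝓕 ⇑f₀ ξ * 𝓕 ⇑a ξ) * 𝓕 ⇑b ξ) := by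
    refine hFb.bdd_mul hm (c := C0 * Ca) (Filter.Eventually.of_forall fun ξ => ?_)
    rw [norm_mul]
    exact mul_le_mul (h0 ξ) (ha ξ) (norm_nonneg _) ((norm_nonneg _).trans (h0 ξ))
  exact hb.congr (Filter.Eventually.of_forall fun ξ => mul_assoc _ _ _)

end AreaAux

end

open AreaAux in
/-- For Schwartz functions `f₀, f₁, f₂ : ℝ² → ℂ`, with the Fourier transform
`f̂(ξ) = ∫ f(x) e^{−2πi⟨x,ξ⟩} dx`, one has
`∫∫ f₀(−u−v) f₁(u) f₂(v) (u₁v₂ − u₂v₁) du dv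
  = −(1/(4π²)) ∫ f̂₀ (∂₁f̂₁ ∂₂f̂₂ − ∂₂f̂₁ ∂₁f̂₂)`:
after Fourier transform the cyclic 2-cocycle of the Euclidean area cocycle takes the usual
form `∫ f̂₀ df̂₁ ∧ df̂₂` up to a nonzero constant. -/
theorem area_cocycle_fourier_transform
    (f₀ f₁ f₂ : 𝓢(EuclideanSpace ℝ (Fin 2), ℂ)) :
    (∫ u : EuclideanSpace ℝ (Fin 2), ∫ v : EuclideanSpace ℝ (Fin 2),
        f₀ (-u - v) * f₁ u * f₂ v * ((u 0 * v 1 - u 1 * v 0 : ℝ) : ℂ)) =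
      -(1 / ((4 * Real.pi ^ 2 : ℝ) : ℂ)) *
        ∫ ξ : EuclideanSpace ℝ (Fin 2),
          𝓕 (⇑f₀) ξ *
            (fderiv ℝ (𝓕 (⇑f₁)) ξ (EuclideanSpace.single 0 1) *
                fderiv ℝ (𝓕 (⇑f₂)) ξ (EuclideanSpace.single 1 1) -
              fderiv ℝ (𝓕 (⇑f₁)) ξ (EuclideanSpace.single 1 1) *
                fderiv ℝ (𝓕 (⇑f₂)) ξ (EuclideanSpace.single 0 1)) := by
  -- rewrite the Fourier-side integrand
  have hrw : ∀ ξ : EuclideanSpace ℝ (Fin 2),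
      𝓕 (⇑f₀) ξ *
        (fderiv ℝ (𝓕 (⇑f₁)) ξ (EuclideanSpace.single 0 1) *
            fderiv ℝ (𝓕 (⇑f₂)) ξ (EuclideanSpace.single 1 1) -
          fderiv ℝ (𝓕 (⇑f₁)) ξ (EuclideanSpace.single 1 1) *
            fderiv ℝ (𝓕 (⇑f₂)) ξ (EuclideanSpace.single 0 1)) =
      (-(4 * (π : ℂ) ^ 2)) *
        (𝓕 ⇑f₀ ξ * (𝓕 ⇑(coordMul 0 f₁) ξ * 𝓕 ⇑(coordMul 1 f₂) ξ) - 𝓕 ⇑f₀ ξ * (𝓕 ⇑(coordMul 1 f₁) ξ * 𝓕 ⇑(coordMul 0 f₂) ξ)) := by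
    intro ξ
    rw [fderiv_fourier_single f₁ 0 ξ, fderiv_fourier_single f₁ 1 ξ,
      fderiv_fourier_single f₂ 0 ξ, fderiv_fourier_single f₂ 1 ξ]
    linear_combination (4 * (π : ℂ) ^ 2 * 𝓕 ⇑f₀ ξ *
      (𝓕 ⇑(coordMul 0 f₁) ξ * 𝓕 ⇑(coordMul 1 f₂) ξ - 𝓕 ⇑(coordMul 1 f₁) ξ * 𝓕 ⇑(coordMul 0 f₂) ξ)) * Complex.I_sq
  -- pointwise rewrite of the space-side integrand
  have hlhs : ∀ u v : EuclideanSpace ℝ (Fin 2),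
      f₀ (-u - v) * f₁ u * f₂ v * ((u 0 * v 1 - u 1 * v 0 : ℝ) : ℂ) =
        f₀ (-u - v) * ((coordMul 0 f₁) u * (coordMul 1 f₂) v) - f₀ (-u - v) * ((coordMul 1 f₁) u * (coordMul 0 f₂) v) := by
    intro u v
    simp only [coordMul_apply]
    push_cast
    ring
  simp_rw [hlhs, hrw]
  rw [MeasureTheory.integral_const_mul,
    integral_sub (fourier_triple_integrable f₀ (coordMul 0 f₁) (coordMul 1 f₂)) (fourier_triple_integrable f₀ (coordMul 1 f₁) (coordMul 0 f₂)),
    ← keyB f₀ (coordMul 0 f₁) (coordMul 1 f₂), ← keyB f₀ (coordMul 1 f₁) (coordMul 0 f₂)]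
  have hsplit :
      (∫ u : EuclideanSpace ℝ (Fin 2), ∫ v : EuclideanSpace ℝ (Fin 2),
          (f₀ (-u - v) * ((coordMul 0 f₁) u * (coordMul 1 f₂) v) - f₀ (-u - v) * ((coordMul 1 f₁) u * (coordMul 0 f₂) v))) =
        (∫ u : EuclideanSpace ℝ (Fin 2), ∫ v : EuclideanSpace ℝ (Fin 2), f₀ (-u - v) * ((coordMul 0 f₁) u * (coordMul 1 f₂) v)) -
          ∫ u : EuclideanSpace ℝ (Fin 2), ∫ v : EuclideanSpace ℝ (Fin 2), f₀ (-u - v) * ((coordMul 1 f₁) u * (coordMul 0 f₂) v) := by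
    rw [MeasureTheory.integral_integral ((prod_integrable f₀ (coordMul 0 f₁) (coordMul 1 f₂)).sub (prod_integrable f₀ (coordMul 1 f₁) (coordMul 0 f₂))),
      MeasureTheory.integral_sub (prod_integrable f₀ (coordMul 0 f₁) (coordMul 1 f₂)) (prod_integrable f₀ (coordMul 1 f₁) (coordMul 0 f₂)),
      ← MeasureTheory.integral_integral
        (f := fun u v : EuclideanSpace ℝ (Fin 2) =>
          f₀ (-u - v) * ((coordMul 0 f₁) u * (coordMul 1 f₂) v))
        (prod_integrable f₀ (coordMul 0 f₁) (coordMul 1 f₂)),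
      ← MeasureTheory.integral_integral
        (f := fun u v : EuclideanSpace ℝ (Fin 2) =>
          f₀ (-u - v) * ((coordMul 1 f₁) u * (coordMul 0 f₂) v))
        (prod_integrable f₀ (coordMul 1 f₁) (coordMul 0 f₂))]
  have hπ : ((π : ℂ)) ≠ 0 := by exact_mod_cast Real.pi_ne_zero
  have hc : -(1 / ((4 * Real.pi ^ 2 : ℝ) : ℂ)) * (-(4 * (π : ℂ) ^ 2)) = 1 := by
    push_cast
    field_simp
  rw [hsplit, ← mul_assoc, hc, one_mul]
end

section
/- Let n ≥ 1, let k ∈ ℕ be arbitrary, and let p ∈ ℕ satisfy 2p > n. Then there exists a constant C > 0 such that for all measurable f, g : ℝⁿ → ℂ with ν_{k+p}(f) < ∞ and ν_k(g) < ∞, the convolution f ⋆ g is defined almost everywhere and satisfies ν_k(f ⋆ g) ≤ C ν_{k+p}(f) ν_k(g). In particular, the rapid decay space H^∞_L(ℝⁿ) = {f ∈ L²(ℝⁿ) : ν_k(f) < ∞ for all k ∈ ℕ} is closed under convolution, i.e. it is a convolution algebra. -/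
open MeasureTheory
open scoped ENNReal

/-- The rapid decay seminorm `ν_k(f) = ‖(1+‖·‖)^k f‖_{L²}` on functions on `ℝⁿ`. -/
noncomputable def rdSeminorm (n k : ℕ) (f : EuclideanSpace ℝ (Fin n) → ℂ) : ℝ≥0∞ :=
  eLpNorm (fun x => ((1 + ‖x‖) ^ k : ℝ) • f x) 2 volume

/-- Submultiplicativity of the weights. -/
lemma rd_weight_submul {X : Type*} [SeminormedAddCommGroup X] (k : ℕ) (x y : X) :
    (1 + ‖x‖) ^ k ≤ (1 + ‖y‖) ^ k * (1 + ‖x - y‖) ^ k := by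
  rw [← mul_pow]
  apply pow_le_pow_left₀ (by positivity)
  have h : ‖x‖ ≤ ‖y‖ + ‖x - y‖ := by
    have h0 : y + (x - y) = x := by abel
    calc ‖x‖ = ‖y + (x - y)‖ := by rw [h0]
      _ ≤ ‖y‖ + ‖x - y‖ := norm_add_le _ _
  nlinarith [norm_nonneg y, norm_nonneg (x - y)]

/-- `rdSeminorm` as an explicit lintegral. -/
lemma rd_eq (n k : ℕ) (f : EuclideanSpace ℝ (Fin n) → ℂ) :
    rdSeminorm n k f
      = (∫⁻ x, (ENNReal.ofReal ((1 + ‖x‖) ^ k) * (‖f x‖₊ : ℝ≥0∞)) ^ (2 : ℝ)) ^ (1 / (2 : ℝ)) := by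
  rw [rdSeminorm, eLpNorm_eq_lintegral_rpow_enorm_toReal (by norm_num) (by norm_num)]
  have h2 : ((2 : ℝ≥0∞)).toReal = (2 : ℝ) := by norm_num
  rw [h2]
  congr 1
  apply lintegral_congr
  intro x
  congr 1
  rw [enorm_smul, Real.enorm_eq_ofReal (by positivity)]; rfl

/-- Let `n ≥ 1`, `k ∈ ℕ`, and `p ∈ ℕ` with `2p > n`.  Then there is
`C > 0` such that for all measurable `f, g : ℝⁿ → ℂ` with `ν_{k+p}(f) < ∞` and
`ν_k(g) < ∞`, the convolution `f ⋆ g` is defined a.e. and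
`ν_k(f ⋆ g) ≤ C ν_{k+p}(f) ν_k(g)`: the rapid decay space `H^∞_L(ℝⁿ)` is a convolution
algebra. -/
theorem rapid_decay_convolution_algebra (n k p : ℕ) (hn : 1 ≤ n) (hp : n < 2 * p) :
    ∃ C > (0 : ℝ), ∀ f g : EuclideanSpace ℝ (Fin n) → ℂ,
      Measurable f → Measurable g →
      rdSeminorm n (k + p) f < ∞ → rdSeminorm n k g < ∞ →
        (∀ᵐ x : EuclideanSpace ℝ (Fin n) ∂volume,
            Integrable (fun y => f y * g (x - y)) volume) ∧
        rdSeminorm n k (fun x => ∫ y, f y * g (x - y)) ≤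
          ENNReal.ofReal C * rdSeminorm n (k + p) f * rdSeminorm n k g := by
  classical
  have conj2 : Real.HolderConjugate 2 2 := Real.HolderConjugate.two_two
  -- the integrability constant
  have hdim : ((Module.finrank ℝ (EuclideanSpace ℝ (Fin n))) : ℝ) < ((2 * p : ℕ) : ℝ) := by
    rw [finrank_euclideanSpace_fin]
    exact_mod_cast hp
  have hI : (∫⁻ x : EuclideanSpace ℝ (Fin n),
      ENNReal.ofReal ((1 + ‖x‖) ^ (-((2 * p : ℕ) : ℝ)))) < ∞ :=
    finite_integral_one_add_norm hdim
  set I : ℝ≥0∞ := ∫⁻ x : EuclideanSpace ℝ (Fin n),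
      ENNReal.ofReal ((1 + ‖x‖) ^ (-((2 * p : ℕ) : ℝ))) with hIdef
  set B : ℝ≥0∞ := I ^ (1 / (2 : ℝ)) with hBdef
  have hB : B < ∞ := ENNReal.rpow_lt_top_of_nonneg (by norm_num) hI.ne
  refine ⟨B.toReal + 1, by positivity, ?_⟩
  intro f g hf hg hνf hνg
  -- weighted functions
  set F : EuclideanSpace ℝ (Fin n) → ℝ≥0∞ :=
    fun y => ENNReal.ofReal ((1 + ‖y‖) ^ k) * (‖f y‖₊ : ℝ≥0∞) with hFdef
  set Fp : EuclideanSpace ℝ (Fin n) → ℝ≥0∞ :=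
    fun y => ENNReal.ofReal ((1 + ‖y‖) ^ (k + p)) * (‖f y‖₊ : ℝ≥0∞) with hFpdef
  set G : EuclideanSpace ℝ (Fin n) → ℝ≥0∞ :=
    fun y => ENNReal.ofReal ((1 + ‖y‖) ^ k) * (‖g y‖₊ : ℝ≥0∞) with hGdef
  have hwm : ∀ m : ℕ, Measurable fun y : EuclideanSpace ℝ (Fin n) =>
      ENNReal.ofReal ((1 + ‖y‖) ^ m) := fun m =>
    ENNReal.measurable_ofReal.comp ((continuous_const.add continuous_norm).pow m).measurable
  have hFm : Measurable F := (hwm k).mul hf.nnnorm.coe_nnreal_ennreal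
  have hFpm : Measurable Fp := (hwm (k + p)).mul hf.nnnorm.coe_nnreal_ennreal
  have hGm : Measurable G := (hwm k).mul hg.nnnorm.coe_nnreal_ennreal
  set A : ℝ≥0∞ := ∫⁻ y, F y with hAdef
  -- Step 1: A ≤ B * ν_{k+p}(f) by Cauchy-Schwarz
  have hsplit : ∀ y : EuclideanSpace ℝ (Fin n),
      F y = ENNReal.ofReal ((1 + ‖y‖) ^ (-(p : ℝ))) * Fp y := by
    intro y
    have hw : (0 : ℝ) < 1 + ‖y‖ := by positivity
    have hreal : (1 + ‖y‖) ^ (-(p : ℝ)) * (1 + ‖y‖) ^ (k + p) = (1 + ‖y‖) ^ k := by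
      rw [← Real.rpow_natCast (1 + ‖y‖) (k + p), ← Real.rpow_natCast (1 + ‖y‖) k,
        ← Real.rpow_add hw]
      congr 1
      push_cast
      ring
    show ENNReal.ofReal ((1 + ‖y‖) ^ k) * (‖f y‖₊ : ℝ≥0∞)
        = ENNReal.ofReal ((1 + ‖y‖) ^ (-(p : ℝ))) *
          (ENNReal.ofReal ((1 + ‖y‖) ^ (k + p)) * (‖f y‖₊ : ℝ≥0∞))
    rw [← hreal, ENNReal.ofReal_mul (by positivity), mul_assoc]
  have hA_le : A ≤ B * rdSeminorm n (k + p) f := by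
    have hmeas1 : AEMeasurable (fun y : EuclideanSpace ℝ (Fin n) =>
        ENNReal.ofReal ((1 + ‖y‖) ^ (-(p : ℝ)))) volume :=
      (ENNReal.measurable_ofReal.comp
        ((continuous_const.add continuous_norm).rpow_const (fun y => Or.inl (by positivity : (0:ℝ) < 1 + ‖y‖).ne')).measurable).aemeasurable
    calc A = ∫⁻ y, ((fun y : EuclideanSpace ℝ (Fin n) =>
            ENNReal.ofReal ((1 + ‖y‖) ^ (-(p : ℝ)))) * Fp) y := by
            apply lintegral_congr; intro y; simpa using hsplit y
      _ ≤ (∫⁻ y, (ENNReal.ofReal ((1 + ‖y‖) ^ (-(p : ℝ)))) ^ (2 : ℝ)) ^ (1 / (2 : ℝ)) *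
            (∫⁻ y, Fp y ^ (2 : ℝ)) ^ (1 / (2 : ℝ)) :=
          ENNReal.lintegral_mul_le_Lp_mul_Lq volume conj2 hmeas1 hFpm.aemeasurable
      _ = B * rdSeminorm n (k + p) f := by
          rw [rd_eq]
          congr 1
          rw [hBdef, hIdef]
          congr 1
          apply lintegral_congr
          intro y
          rw [ENNReal.ofReal_rpow_of_nonneg (by positivity) (by norm_num),
            ← Real.rpow_mul (by positivity : (0 : ℝ) ≤ 1 + ‖y‖)]
          congr 2
          push_cast
          ring
  have hAfin : A < ∞ := lt_of_le_of_lt hA_le (ENNReal.mul_lt_top hB hνf)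
  -- the dominating convolution
  set Φ : EuclideanSpace ℝ (Fin n) → ℝ≥0∞ := fun x => ∫⁻ y, F y * G (x - y) with hΦdef
  have hprod : Measurable (Function.uncurry fun x y :
      EuclideanSpace ℝ (Fin n) => F y * G (x - y)) :=
    (hFm.comp measurable_snd).mul (hGm.comp (measurable_fst.sub measurable_snd))
  have hΦm : Measurable Φ := hprod.lintegral_prod_right
  have hGmx : ∀ x : EuclideanSpace ℝ (Fin n),
      Measurable fun y => G (x - y) := fun x =>
    hGm.comp (measurable_const.sub measurable_id)
  -- Step 2: pointwise Cauchy-Schwarz: Φ x ^ 2 ≤ A * ∫ F y * G(x-y)^2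
  have hCS : ∀ x, Φ x ^ (2 : ℝ) ≤ A * ∫⁻ y, F y * (G (x - y)) ^ (2 : ℝ) := by
    intro x
    have key : Φ x ≤ A ^ (1 / (2 : ℝ)) *
        (∫⁻ y, F y * (G (x - y)) ^ (2 : ℝ)) ^ (1 / (2 : ℝ)) := by
      have h := ENNReal.lintegral_mul_le_Lp_mul_Lq volume conj2
        ((hFm.pow_const ((1 : ℝ) / 2)).aemeasurable)
        (((hFm.pow_const ((1 : ℝ) / 2)).mul (hGmx x)).aemeasurable)
      have hl : ∀ y, ((fun y => F y ^ ((1 : ℝ) / 2)) *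
          (fun y => F y ^ ((1 : ℝ) / 2) * G (x - y))) y = F y * G (x - y) := by
        intro y
        simp only [Pi.mul_apply]
        rw [← mul_assoc, ← ENNReal.rpow_add_of_nonneg _ _ (by norm_num) (by norm_num)]
        norm_num
      have hr1 : ∀ y, (F y ^ ((1 : ℝ) / 2)) ^ (2 : ℝ) = F y := by
        intro y
        rw [← ENNReal.rpow_mul]
        norm_num
      have hr2 : ∀ y, (F y ^ ((1 : ℝ) / 2) * G (x - y)) ^ (2 : ℝ)
          = F y * (G (x - y)) ^ (2 : ℝ) := by
        intro y
        rw [ENNReal.mul_rpow_of_nonneg _ _ (by norm_num), ← ENNReal.rpow_mul]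
        norm_num
      calc Φ x = ∫⁻ y, ((fun y => F y ^ ((1 : ℝ) / 2)) *
            (fun y => F y ^ ((1 : ℝ) / 2) * G (x - y))) y := by
            apply lintegral_congr; intro y; rw [hl]
        _ ≤ (∫⁻ y, (F y ^ ((1 : ℝ) / 2)) ^ (2 : ℝ)) ^ (1 / (2 : ℝ)) *
            (∫⁻ y, (F y ^ ((1 : ℝ) / 2) * G (x - y)) ^ (2 : ℝ)) ^ (1 / (2 : ℝ)) := h
        _ = A ^ (1 / (2 : ℝ)) *
            (∫⁻ y, F y * (G (x - y)) ^ (2 : ℝ)) ^ (1 / (2 : ℝ)) := by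
            rw [lintegral_congr hr1, lintegral_congr hr2]
    calc Φ x ^ (2 : ℝ) ≤ (A ^ (1 / (2 : ℝ)) *
        (∫⁻ y, F y * (G (x - y)) ^ (2 : ℝ)) ^ (1 / (2 : ℝ))) ^ (2 : ℝ) :=
        ENNReal.rpow_le_rpow key (by norm_num)
      _ = A * ∫⁻ y, F y * (G (x - y)) ^ (2 : ℝ) := by
        rw [ENNReal.mul_rpow_of_nonneg _ _ (by norm_num),
          ← ENNReal.rpow_mul, ← ENNReal.rpow_mul]
        norm_num
  -- Step 3: Tonelli
  have hT : (∫⁻ x, ∫⁻ y, F y * (G (x - y)) ^ (2 : ℝ)) = A * ∫⁻ z, G z ^ (2 : ℝ) := by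
    have hm : AEMeasurable (Function.uncurry fun x y :
        EuclideanSpace ℝ (Fin n) => F y * (G (x - y)) ^ (2 : ℝ))
        ((volume : Measure (EuclideanSpace ℝ (Fin n))).prod volume) :=
      ((hFm.comp measurable_snd).mul
        ((hGm.comp (measurable_fst.sub measurable_snd)).pow_const (2 : ℝ))).aemeasurable
    rw [lintegral_lintegral_swap hm]
    have hinner : ∀ y : EuclideanSpace ℝ (Fin n),
        (∫⁻ x, F y * (G (x - y)) ^ (2 : ℝ)) = F y * ∫⁻ z, G z ^ (2 : ℝ) := by
      intro y
      have hmy : Measurable fun x : EuclideanSpace ℝ (Fin n) => (G (x - y)) ^ (2 : ℝ) :=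
        (hGm.comp (measurable_id.sub measurable_const)).pow_const (2 : ℝ)
      rw [lintegral_const_mul _ hmy]
      congr 1
      exact lintegral_sub_right_eq_self (fun z => G z ^ (2 : ℝ)) y
    calc (∫⁻ y, ∫⁻ x, F y * (G (x - y)) ^ (2 : ℝ))
        = ∫⁻ y, F y * ∫⁻ z, G z ^ (2 : ℝ) := lintegral_congr hinner
      _ = A * ∫⁻ z, G z ^ (2 : ℝ) := lintegral_mul_const _ hFm
  have hGsq : (∫⁻ z, G z ^ (2 : ℝ)) = (rdSeminorm n k g) ^ (2 : ℝ) := by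
    rw [rd_eq, ← ENNReal.rpow_mul]
    norm_num
    rfl
  have hGfin : (∫⁻ z, G z ^ (2 : ℝ)) < ∞ := by
    rw [hGsq]
    exact ENNReal.rpow_lt_top_of_nonneg (by norm_num) hνg.ne
  -- Step 4: the main square bound
  have hmain : (∫⁻ x, Φ x ^ (2 : ℝ)) ≤ A ^ (2 : ℝ) * ∫⁻ z, G z ^ (2 : ℝ) := by
    calc (∫⁻ x, Φ x ^ (2 : ℝ))
        ≤ ∫⁻ x, A * ∫⁻ y, F y * (G (x - y)) ^ (2 : ℝ) := lintegral_mono hCS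
      _ = A * ∫⁻ x, ∫⁻ y, F y * (G (x - y)) ^ (2 : ℝ) := by
          have hmy : Measurable fun x : EuclideanSpace ℝ (Fin n) =>
              ∫⁻ y, F y * (G (x - y)) ^ (2 : ℝ) :=
            Measurable.lintegral_prod_right
              (f := fun x y : EuclideanSpace ℝ (Fin n) => F y * (G (x - y)) ^ (2 : ℝ))
              ((hFm.comp measurable_snd).mul
                ((hGm.comp (measurable_fst.sub measurable_snd)).pow_const (2 : ℝ)))
          exact lintegral_const_mul _ hmy
      _ = A * (A * ∫⁻ z, G z ^ (2 : ℝ)) := by rw [hT]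
      _ = A ^ (2 : ℝ) * ∫⁻ z, G z ^ (2 : ℝ) := by
          have hAsq : A ^ (2 : ℝ) = A * A := by
            rw [show (2 : ℝ) = ((2 : ℕ) : ℝ) by norm_num, ENNReal.rpow_natCast, pow_two]
          rw [hAsq, mul_assoc]
  -- Step 5: pointwise domination of the weighted convolution by Φ
  have hpt : ∀ x, ENNReal.ofReal ((1 + ‖x‖) ^ k) * (‖∫ y, f y * g (x - y)‖₊ : ℝ≥0∞) ≤ Φ x := by
    intro x
    have h1 : (‖∫ y, f y * g (x - y)‖₊ : ℝ≥0∞) ≤ ∫⁻ y, ‖f y * g (x - y)‖₊ :=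
      enorm_integral_le_lintegral_enorm _
    calc ENNReal.ofReal ((1 + ‖x‖) ^ k) * (‖∫ y, f y * g (x - y)‖₊ : ℝ≥0∞)
        ≤ ENNReal.ofReal ((1 + ‖x‖) ^ k) * ∫⁻ y, ‖f y * g (x - y)‖₊ :=
          mul_le_mul_right h1 _
      _ = ∫⁻ y, ENNReal.ofReal ((1 + ‖x‖) ^ k) * ((‖f y‖₊ : ℝ≥0∞) * ‖g (x - y)‖₊) := by
          have hmy : Measurable fun y : EuclideanSpace ℝ (Fin n) =>
              (‖f y‖₊ : ℝ≥0∞) * (‖g (x - y)‖₊ : ℝ≥0∞) :=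
            hf.nnnorm.coe_nnreal_ennreal.mul ((hg.comp (measurable_const.sub measurable_id)).nnnorm.coe_nnreal_ennreal)
          have hpt2 : (∫⁻ y, (‖f y * g (x - y)‖₊ : ℝ≥0∞))
              = ∫⁻ y, (‖f y‖₊ : ℝ≥0∞) * (‖g (x - y)‖₊ : ℝ≥0∞) := by
            apply lintegral_congr
            intro y
            simp [nnnorm_mul]
          rw [hpt2, ← lintegral_const_mul _ hmy]
      _ ≤ Φ x := by
          apply lintegral_mono
          intro y
          have hw : ENNReal.ofReal ((1 + ‖x‖) ^ k)
              ≤ ENNReal.ofReal ((1 + ‖y‖) ^ k) * ENNReal.ofReal ((1 + ‖x - y‖) ^ k) := by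
            rw [← ENNReal.ofReal_mul (by positivity)]
            exact ENNReal.ofReal_le_ofReal (rd_weight_submul k x y)
          calc ENNReal.ofReal ((1 + ‖x‖) ^ k) * ((‖f y‖₊ : ℝ≥0∞) * ‖g (x - y)‖₊)
              ≤ (ENNReal.ofReal ((1 + ‖y‖) ^ k) * ENNReal.ofReal ((1 + ‖x - y‖) ^ k)) *
                ((‖f y‖₊ : ℝ≥0∞) * ‖g (x - y)‖₊) := mul_le_mul_left hw _
            _ = F y * G (x - y) := by rw [hFdef, hGdef]; ring
  -- a.e. finiteness of Φ
  have hΦfin : (∫⁻ x, Φ x ^ (2 : ℝ)) < ∞ :=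
    lt_of_le_of_lt hmain (ENNReal.mul_lt_top
      (ENNReal.rpow_lt_top_of_nonneg (by norm_num) hAfin.ne) hGfin)
  have hΦae : ∀ᵐ x : EuclideanSpace ℝ (Fin n) ∂volume, Φ x < ∞ := by
    have := ae_lt_top (hΦm.pow_const (2 : ℝ)) hΦfin.ne
    filter_upwards [this] with x hx
    by_contra h
    rw [not_lt, top_le_iff] at h
    rw [h, ENNReal.top_rpow_of_pos (by norm_num)] at hx
    exact absurd hx (lt_irrefl _)
  constructor
  · -- a.e. integrability
    filter_upwards [hΦae] with x hx
    refine ⟨(hf.mul (hg.comp (measurable_const.sub measurable_id))).aestronglyMeasurable, ?_⟩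
    rw [HasFiniteIntegral]
    calc (∫⁻ y, ‖f y * g (x - y)‖₊) ≤ Φ x := by
          apply lintegral_mono
          intro y
          simp only [nnnorm_mul, ENNReal.coe_mul]
          have h1 : (1 : ℝ≥0∞) ≤ ENNReal.ofReal ((1 + ‖y‖) ^ k) := by
            rw [ENNReal.one_le_ofReal]
            exact one_le_pow₀ (by linarith [norm_nonneg y])
          have h2 : (1 : ℝ≥0∞) ≤ ENNReal.ofReal ((1 + ‖x - y‖) ^ k) := by
            rw [ENNReal.one_le_ofReal]
            exact one_le_pow₀ (by linarith [norm_nonneg (x - y)])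
          calc (‖f y‖₊ : ℝ≥0∞) * ‖g (x - y)‖₊
              ≤ (ENNReal.ofReal ((1 + ‖y‖) ^ k) * ‖f y‖₊) *
                (ENNReal.ofReal ((1 + ‖x - y‖) ^ k) * ‖g (x - y)‖₊) := by
                apply mul_le_mul'
                · exact le_mul_of_one_le_left zero_le h1
                · exact le_mul_of_one_le_left zero_le h2
            _ = F y * G (x - y) := rfl
      _ < ∞ := hx
  · -- the norm bound
    have hfinal : rdSeminorm n k (fun x => ∫ y, f y * g (x - y))
        ≤ A * rdSeminorm n k g := by
      rw [rd_eq]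
      calc (∫⁻ x, (ENNReal.ofReal ((1 + ‖x‖) ^ k) *
            (‖∫ y, f y * g (x - y)‖₊ : ℝ≥0∞)) ^ (2 : ℝ)) ^ (1 / (2 : ℝ))
          ≤ (∫⁻ x, Φ x ^ (2 : ℝ)) ^ (1 / (2 : ℝ)) := by
            apply ENNReal.rpow_le_rpow _ (by norm_num)
            exact lintegral_mono fun x => ENNReal.rpow_le_rpow (hpt x) (by norm_num)
        _ ≤ (A ^ (2 : ℝ) * ∫⁻ z, G z ^ (2 : ℝ)) ^ (1 / (2 : ℝ)) :=
            ENNReal.rpow_le_rpow hmain (by norm_num)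
        _ = A * rdSeminorm n k g := by
            rw [ENNReal.mul_rpow_of_nonneg _ _ (by norm_num), ← ENNReal.rpow_mul, rd_eq]
            norm_num
            rfl
    calc rdSeminorm n k (fun x => ∫ y, f y * g (x - y))
        ≤ A * rdSeminorm n k g := hfinal
      _ ≤ (B * rdSeminorm n (k + p) f) * rdSeminorm n k g := mul_le_mul_left hA_le _
      _ ≤ ENNReal.ofReal (B.toReal + 1) * rdSeminorm n (k + p) f * rdSeminorm n k g := by
          apply mul_le_mul_left
          apply mul_le_mul_left
          calc B = ENNReal.ofReal B.toReal := (ENNReal.ofReal_toReal hB.ne).symm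
            _ ≤ ENNReal.ofReal (B.toReal + 1) := ENNReal.ofReal_le_ofReal (by linarith)
end

section
/- Let A be a unital (not necessarily commutative) ring and let d, q ∈ A. Set s₊ := 1 − q·d and s₋ := 1 − d·q. Then the 2×2 matrix over A given by P := [[s₊², s₊·(1+s₊)·q], [s₋·d, 1 − s₋²]] is an idempotent: P·P = P. -/
/-- Connes–Skandalis projector.  Let `A` be a unital ring, `d, q ∈ A`,
`s₊ = 1 − q d`, `s₋ = 1 − d q`.  Then the 2×2 matrix
`P = [[s₊², s₊(1+s₊)q], [s₋ d, 1 − s₋²]]` over `A` is an idempotent. -/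
theorem connes_skandalis_projector_idempotent
    {A : Type*} [Ring A] (d q sp sm : A)
    (hsp : sp = 1 - q * d) (hsm : sm = 1 - d * q) :
    (!![sp ^ 2, sp * (1 + sp) * q; sm * d, 1 - sm ^ 2] : Matrix (Fin 2) (Fin 2) A) *
        !![sp ^ 2, sp * (1 + sp) * q; sm * d, 1 - sm ^ 2] =
      !![sp ^ 2, sp * (1 + sp) * q; sm * d, 1 - sm ^ 2] := by
  subst hsp hsm
  ext i j
  fin_cases i <;> fin_cases j <;>
    simp [Matrix.mul_apply, Fin.sum_univ_succ] <;> noncomm_ring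
end
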